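/- Let E and F be finite-dimensional real normed vector spaces, let μ : E → F be a continuous map satisfying μ(t·q) = t²·μ(q) for all t > 0 and q ∈ E, and let T : E → E' be a linear map into a real normed space E' such that T q ≠ 0 for every q ≠ 0 with μ(q) = 0. Then for every c ∈ F there exist λ > 0 and R > 0 such that ‖T q‖ ≥ λ‖q‖ for every q ∈ E with μ(q) = c and ‖q‖ ≥ R. -/
import Mathlib


/-- Growth estimate for finite-dimensional hyperkähler quotients: if `μ : E → F` is
continuous and homogeneous of degree `2`, and `T` is a linear map nonvanishing on
`μ⁻¹(0) \ {0}`, then for every `c` there are `λ > 0`, `R > 0` with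
`‖T q‖ ≥ λ‖q‖` whenever `μ(q) = c` and `‖q‖ ≥ R`. -/
theorem fundamental_vector_field_growth
    {E F E' : Type*}
    [NormedAddCommGroup E] [NormedSpace ℝ E] [FiniteDimensional ℝ E]
    [NormedAddCommGroup F] [NormedSpace ℝ F] [FiniteDimensional ℝ F]
    [NormedAddCommGroup E'] [NormedSpace ℝ E']
    (μ : E → F) (hμc : Continuous μ)
    (hμh : ∀ t : ℝ, 0 < t → ∀ q : E, μ (t • q) = (t ^ 2) • μ q)
    (T : E →ₗ[ℝ] E')
    (hT : ∀ q : E, q ≠ 0 → μ q = 0 → T q ≠ 0) :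
    ∀ c : F, ∃ lam : ℝ, 0 < lam ∧ ∃ R : ℝ, 0 < R ∧
      ∀ q : E, μ q = c → R ≤ ‖q‖ → lam * ‖q‖ ≤ ‖T q‖ := by
  have hTc : Continuous T := T.continuous_of_finiteDimensional
  -- Key uniform estimate on the unit sphere
  have key : ∃ ε > (0:ℝ), ∃ δ > (0:ℝ),
      ∀ u : E, ‖u‖ = 1 → ‖μ u‖ ≤ ε → δ ≤ ‖T u‖ := by
    by_contra h
    push_neg at h
    have h' : ∀ n : ℕ, ∃ u : E,
        ‖u‖ = 1 ∧ ‖μ u‖ ≤ 1/(n+1) ∧ ‖T u‖ < 1/(n+1) := by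
      intro n
      have hn : (0:ℝ) < 1/(n+1) := by positivity
      obtain ⟨u, hu1, hu2, hu3⟩ := h (1/(n+1)) hn (1/(n+1)) hn
      exact ⟨u, hu1, hu2, hu3⟩
    choose u hu1 hu2 hu3 using h'
    have hus : ∀ n, u n ∈ Metric.sphere (0:E) 1 := by
      intro n; simpa [mem_sphere_iff_norm] using hu1 n
    obtain ⟨a, ha, φ, hφ, hconv⟩ := (isCompact_sphere (0:E) 1).tendsto_subseq hus
    have ha1 : ‖a‖ = 1 := by simpa [mem_sphere_iff_norm] using ha
    have hane : a ≠ 0 := by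
      intro h0; rw [h0, norm_zero] at ha1; norm_num at ha1
    have hφt : Filter.Tendsto φ Filter.atTop Filter.atTop := hφ.tendsto_atTop
    have hlim0 : Filter.Tendsto (fun n : ℕ => 1/((φ n : ℝ)+1))
        Filter.atTop (nhds 0) :=
      tendsto_one_div_add_atTop_nhds_zero_nat.comp hφt
    -- μ a = 0
    have hμa : μ a = 0 := by
      have h1 : Filter.Tendsto (fun n => μ (u (φ n))) Filter.atTop (nhds (μ a)) :=
        (hμc.continuousAt.tendsto).comp hconv
      have h2 : Filter.Tendsto (fun n => ‖μ (u (φ n))‖) Filter.atTop (nhds 0) := by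
        apply squeeze_zero (fun n => norm_nonneg _) (fun n => hu2 (φ n)) hlim0
      have h3 : Filter.Tendsto (fun n => μ (u (φ n))) Filter.atTop (nhds 0) :=
        tendsto_zero_iff_norm_tendsto_zero.2 h2
      exact tendsto_nhds_unique h1 h3
    -- T a = 0
    have hTa : T a = 0 := by
      have h1 : Filter.Tendsto (fun n => T (u (φ n))) Filter.atTop (nhds (T a)) :=
        (hTc.continuousAt.tendsto).comp hconv
      have h2 : Filter.Tendsto (fun n => ‖T (u (φ n))‖) Filter.atTop (nhds 0) := by
        apply squeeze_zero (fun n => norm_nonneg _) (fun n => (hu3 (φ n)).le) hlim0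
      have h3 : Filter.Tendsto (fun n => T (u (φ n))) Filter.atTop (nhds 0) :=
        tendsto_zero_iff_norm_tendsto_zero.2 h2
      exact tendsto_nhds_unique h1 h3
    exact hT a hane hμa hTa
  obtain ⟨ε, hε, δ, hδ, hkey⟩ := key
  intro c
  refine ⟨δ, hδ, max 1 (Real.sqrt (‖c‖ / ε)), lt_of_lt_of_le one_pos (le_max_left _ _), ?_⟩
  intro q hq hR
  have hq1 : (1:ℝ) ≤ ‖q‖ := le_trans (le_max_left _ _) hR
  have hqpos : (0:ℝ) < ‖q‖ := lt_of_lt_of_le one_pos hq1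
  set r := ‖q‖ with hr
  have hrinv : (0:ℝ) < r⁻¹ := inv_pos.2 hqpos
  set u := r⁻¹ • q with hu
  have hunorm : ‖u‖ = 1 := by
    rw [hu, norm_smul, norm_inv, Real.norm_eq_abs, abs_of_pos hqpos, ← hr,
      inv_mul_cancel₀ (ne_of_gt hqpos)]
  have hμu : μ u = (r⁻¹ ^ 2) • c := by
    rw [hu, hμh r⁻¹ hrinv q, hq]
  -- r^2 ≥ ‖c‖/ε
  have hr2 : ‖c‖ / ε ≤ r ^ 2 := by
    have h1 : Real.sqrt (‖c‖ / ε) ≤ r := le_trans (le_max_right _ _) hR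
    have h2 : Real.sqrt (‖c‖ / ε) ^ 2 ≤ r ^ 2 :=
      pow_le_pow_left₀ (Real.sqrt_nonneg _) h1 2
    rwa [Real.sq_sqrt (by positivity)] at h2
  have hμunorm : ‖μ u‖ ≤ ε := by
    rw [hμu, norm_smul, Real.norm_eq_abs, abs_of_pos (by positivity : (0:ℝ) < r⁻¹ ^ 2)]
    have : ‖c‖ ≤ ε * r ^ 2 := by
      rw [div_le_iff₀ hε] at hr2
      linarith [hr2]
    rw [inv_pow]
    rw [inv_mul_le_iff₀ (by positivity : (0:ℝ) < r ^ 2)]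
    linarith [this]
  have hTu : δ ≤ ‖T u‖ := hkey u hunorm hμunorm
  have hTu' : ‖T u‖ = r⁻¹ * ‖T q‖ := by
    rw [hu, map_smul, norm_smul, norm_inv, Real.norm_eq_abs, abs_of_pos hqpos]
  rw [hTu'] at hTu
  calc δ * r ≤ (r⁻¹ * ‖T q‖) * r := by
        apply mul_le_mul_of_nonneg_right hTu (le_of_lt hqpos)
    _ = ‖T q‖ := by field_simp
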